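/- For all w₁, w₂ in the open unit ball of a complex Hilbert space U with w₁ ≠ w₂, we have Re⟨w₁ - w₂, φ(w₁) - φ(w₂)⟩ > 0, where φ(w) = w/(1 - ‖w‖²). -/

import Mathlib

open scoped InnerProductSpace

/-- Strict monotonicity of the funnel-control nonlinearity `φ(w) = w / (1 - ‖w‖²)`
on the open unit ball of a complex Hilbert space. -/
theorem stmt_1 {U : Type*} [NormedAddCommGroup U] [InnerProductSpace ℂ U] [CompleteSpace U]
    (φ : U → U) (hφ : ∀ w : U, φ w = ((1 - ‖w‖ ^ 2 : ℝ) : ℂ)⁻¹ • w)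
    (w₁ w₂ : U) (h₁ : ‖w₁‖ < 1) (h₂ : ‖w₂‖ < 1) (hne : w₁ ≠ w₂) :
    0 < (⟪w₁ - w₂, φ w₁ - φ w₂⟫_ℂ).re := by
  have hn1 := norm_nonneg w₁
  have hn2 := norm_nonneg w₂
  have hd1 : (0:ℝ) < 1 - ‖w₁‖ ^ 2 := by nlinarith
  have hd2 : (0:ℝ) < 1 - ‖w₂‖ ^ 2 := by nlinarith
  set s₁ : ℝ := (1 - ‖w₁‖ ^ 2)⁻¹ with hs₁def
  set s₂ : ℝ := (1 - ‖w₂‖ ^ 2)⁻¹ with hs₂def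
  have hs1 : 0 < s₁ := inv_pos.2 hd1
  have hs2 : 0 < s₂ := inv_pos.2 hd2
  have hself1 : (⟪w₁, w₁⟫_ℂ).re = ‖w₁‖ ^ 2 := by
    simpa using inner_self_eq_norm_sq (𝕜 := ℂ) w₁
  have hself2 : (⟪w₂, w₂⟫_ℂ).re = ‖w₂‖ ^ 2 := by
    simpa using inner_self_eq_norm_sq (𝕜 := ℂ) w₂
  have hsymm : (⟪w₂, w₁⟫_ℂ).re = (⟪w₁, w₂⟫_ℂ).re := by
    simpa using (inner_re_symm (𝕜 := ℂ) w₁ w₂).symm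
  have key : (⟪w₁ - w₂, φ w₁ - φ w₂⟫_ℂ).re
      = s₁ * ‖w₁‖ ^ 2 + s₂ * ‖w₂‖ ^ 2 - (s₁ + s₂) * (⟪w₁, w₂⟫_ℂ).re := by
    rw [hφ, hφ, ← Complex.ofReal_inv, ← Complex.ofReal_inv]
    simp only [inner_sub_right, inner_sub_left, inner_smul_right,
      Complex.sub_re, Complex.re_ofReal_mul]
    rw [hself1, hself2, hsymm, ← hs₁def, ← hs₂def]
    ring
  rw [key]
  have hsub : ‖w₁ - w₂‖ ^ 2 = ‖w₁‖ ^ 2 - 2 * (⟪w₁, w₂⟫_ℂ).re + ‖w₂‖ ^ 2 := by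
    simpa using norm_sub_sq (𝕜 := ℂ) w₁ w₂
  have hpos : 0 < ‖w₁ - w₂‖ ^ 2 := by
    have : w₁ - w₂ ≠ 0 := sub_ne_zero.2 hne
    exact pow_pos (norm_pos_iff.2 this) 2
  have hdiff : s₁ - s₂ = (‖w₁‖ ^ 2 - ‖w₂‖ ^ 2) * (s₁ * s₂) := by
    rw [hs₁def, hs₂def]
    field_simp
    ring
  nlinarith [mul_pos hs1 hs2, sq_nonneg (‖w₁‖ ^ 2 - ‖w₂‖ ^ 2),
    mul_pos (add_pos hs1 hs2) hpos,
    mul_nonneg (mul_pos hs1 hs2).le (sq_nonneg (‖w₁‖ ^ 2 - ‖w₂‖ ^ 2))]
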